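/- For all u, v ∈ L²(μ), the one-sided limit lim_{τ→0⁺} (g(u + τ·v) − g(u))/τ exists and equals g'(u; v) = ∫_{{x : u(x)>0}} v dμ − ∫_{{x : u(x)<0}} v dμ + ∫_{{x : u(x)=0}} |v| dμ. (Explicit directional derivative of the full-sparsity functional, used in the definition (3.24) of the critical cone.) -/

import Mathlib

open MeasureTheory Filter

/-- Explicit directional derivative of the full-sparsity functional `g u = ∫ |u| dμ`
on `L²(μ)`: for every `u, v ∈ L²(μ)`, the one-sided difference quotients
`(g(u + τ v) - g(u)) / τ` converge, as `τ → 0⁺`, to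
`∫_{u>0} v dμ - ∫_{u<0} v dμ + ∫_{u=0} |v| dμ`. -/
theorem fullSparsity_directional_derivative
    {X : Type*} [MeasurableSpace X] (μ : Measure X) [IsFiniteMeasure μ]
    (u v : Lp ℝ 2 μ) :
    Filter.Tendsto
      (fun τ : ℝ => ((∫ x, |(u + τ • v) x| ∂μ) - ∫ x, |u x| ∂μ) / τ)
      (nhdsWithin 0 (Set.Ioi 0))
      (nhds ((∫ x in {x | 0 < u x}, v x ∂μ) - (∫ x in {x | u x < 0}, v x ∂μ)
        + ∫ x in {x | u x = 0}, |v x| ∂μ)) := by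
  have hmu : Measurable (fun x => u x) := (Lp.stronglyMeasurable u).measurable
  have hmv : Measurable (fun x => v x) := (Lp.stronglyMeasurable v).measurable
  have hiu : Integrable (fun x => u x) μ := (Lp.memLp u).integrable (by norm_num)
  have hiv : Integrable (fun x => v x) μ := (Lp.memLp v).integrable (by norm_num)
  set h : X → ℝ := fun x => if 0 < u x then v x else if u x < 0 then -(v x) else |v x| with hh
  have hs1 : MeasurableSet {x | 0 < u x} := measurableSet_lt measurable_const hmu
  have hs2 : MeasurableSet {x | (u : X → ℝ) x < 0} := measurableSet_lt hmu measurable_const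
  have hs3 : MeasurableSet {x | (u : X → ℝ) x = 0} := hmu (measurableSet_singleton 0)
  -- the integral of the limit function equals the RHS
  have hint : ∫ x, h x ∂μ
      = (∫ x in {x | 0 < u x}, v x ∂μ) - (∫ x in {x | (u : X → ℝ) x < 0}, v x ∂μ)
        + ∫ x in {x | (u : X → ℝ) x = 0}, |v x| ∂μ := by
    have heq : h = fun x => Set.indicator {x | 0 < u x} (fun x => v x) x
        + Set.indicator {x | (u : X → ℝ) x < 0} (fun x => -(v x)) x
        + Set.indicator {x | (u : X → ℝ) x = 0} (fun x => |v x|) x := by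
      funext x
      simp only [Set.indicator_apply, Set.mem_setOf_eq, hh]
      rcases lt_trichotomy ((u : X → ℝ) x) 0 with h1 | h1 | h1 <;>
        split_ifs <;> simp_all <;> linarith
    rw [heq, integral_add, integral_add, integral_indicator hs1, integral_indicator hs2,
      integral_indicator hs3, integral_neg]
    · ring
    · exact hiv.indicator hs1
    · exact hiv.neg.indicator hs2
    · exact (hiv.indicator hs1).add (hiv.neg.indicator hs2)
    · exact hiv.abs.indicator hs3
  rw [← hint]
  -- dominated convergence for F τ x = (|u x + τ * v x| - |u x|)/τ
  have main : Tendsto (fun τ : ℝ => ∫ x, (|u x + τ * v x| - |u x|) / τ ∂μ)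
      (nhdsWithin 0 (Set.Ioi 0)) (nhds (∫ x, h x ∂μ)) := by
    apply tendsto_integral_filter_of_dominated_convergence (fun x => |v x|)
    · filter_upwards with τ
      exact (((hmu.add (hmv.const_mul τ)).abs.sub hmu.abs).div_const τ).aestronglyMeasurable
    · filter_upwards [self_mem_nhdsWithin] with τ (hτ : (0:ℝ) < τ)
      filter_upwards with x
      have h1 : |(|u x + τ * v x| - |u x|)| ≤ |τ * v x| := by
        have := abs_abs_sub_abs_le_abs_sub (u x + τ * v x) (u x)
        simpa using this
      rw [Real.norm_eq_abs, abs_div, abs_of_pos hτ, div_le_iff₀ hτ]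
      calc |(|u x + τ * v x| - |u x|)| ≤ |τ * v x| := h1
        _ = |v x| * τ := by rw [abs_mul, abs_of_pos hτ]; ring
    · exact hiv.abs
    · filter_upwards with x
      rcases lt_trichotomy ((u : X → ℝ) x) 0 with hx | hx | hx
      · -- u x < 0 : limit is -(v x)
        have hlim : h x = -(v x) := by simp [hh, hx, not_lt.mpr hx.le]
        rw [hlim]
        have hev : ∀ᶠ τ in nhdsWithin (0:ℝ) (Set.Ioi 0),
            (|u x + τ * v x| - |u x|) / τ = -(v x) := by
          have ht : Tendsto (fun τ : ℝ => τ * |v x|) (nhds 0) (nhds 0) := by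
            simpa using (tendsto_id.mul_const (|v x|) : Tendsto (fun τ:ℝ => τ * |v x|) (nhds 0) (nhds (0 * |v x|)))
          have h2 : ∀ᶠ τ in nhds (0:ℝ), τ * |v x| < -(u x) :=
            ht.eventually_lt_const (by linarith)
          filter_upwards [eventually_nhdsWithin_of_eventually_nhds h2,
            self_mem_nhdsWithin] with τ hτ1 (hτ2 : (0:ℝ) < τ)
          have hb : τ * v x ≤ τ * |v x| := by
            exact mul_le_mul_of_nonneg_left (le_abs_self _) hτ2.le
          have hneg : u x + τ * v x < 0 := by linarith
          rw [abs_of_neg hneg, abs_of_neg hx]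
          field_simp
          ring
        exact tendsto_const_nhds.congr' (hev.mono fun τ h => h.symm)
      · -- u x = 0 : limit is |v x|
        have hlim : h x = |v x| := by simp [hh, hx]
        rw [hlim]
        have hev : ∀ᶠ τ in nhdsWithin (0:ℝ) (Set.Ioi 0),
            (|u x + τ * v x| - |u x|) / τ = |v x| := by
          filter_upwards [self_mem_nhdsWithin] with τ (hτ : (0:ℝ) < τ)
          rw [hx]
          rw [zero_add, abs_zero, sub_zero, abs_mul, abs_of_pos hτ]
          exact mul_div_cancel_left₀ _ hτ.ne'
        exact tendsto_const_nhds.congr' (hev.mono fun τ h => h.symm)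
      · -- 0 < u x : limit is v x
        have hlim : h x = v x := by simp [hh, hx]
        rw [hlim]
        have hev : ∀ᶠ τ in nhdsWithin (0:ℝ) (Set.Ioi 0),
            (|u x + τ * v x| - |u x|) / τ = v x := by
          have ht : Tendsto (fun τ : ℝ => τ * |v x|) (nhds 0) (nhds 0) := by
            simpa using (tendsto_id.mul_const (|v x|) : Tendsto (fun τ:ℝ => τ * |v x|) (nhds 0) (nhds (0 * |v x|)))
          have h2 : ∀ᶠ τ in nhds (0:ℝ), τ * |v x| < u x :=
            ht.eventually_lt_const hx
          filter_upwards [eventually_nhdsWithin_of_eventually_nhds h2,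
            self_mem_nhdsWithin] with τ hτ1 (hτ2 : (0:ℝ) < τ)
          have hb : -(τ * |v x|) ≤ τ * v x := by
            have := mul_le_mul_of_nonneg_left (neg_abs_le (v x)) hτ2.le
            linarith [this]
          have hpos : 0 < u x + τ * v x := by linarith
          rw [abs_of_pos hpos, abs_of_pos hx]
          field_simp
          ring
        exact tendsto_const_nhds.congr' (hev.mono fun τ h => h.symm)
  -- identify the quotient with the integral of the quotient, on Ioi 0
  refine main.congr' ?_
  filter_upwards [self_mem_nhdsWithin] with τ (hτ : (0:ℝ) < τ)
  have hcoe : (fun x => |(u + τ • v) x|) =ᵐ[μ] fun x => |u x + τ * v x| := by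
    filter_upwards [Lp.coeFn_add u (τ • v), Lp.coeFn_smul τ v] with x h1 h2
    rw [h1, Pi.add_apply, h2, Pi.smul_apply, smul_eq_mul]
  have hint2 : Integrable (fun x => |u x + τ * v x|) μ :=
    (hiu.add (hiv.const_mul τ)).abs
  rw [show (∫ x, |(u + τ • v) x| ∂μ) = ∫ x, |u x + τ * v x| ∂μ from integral_congr_ae hcoe]
  rw [← integral_sub hint2 hiu.abs, ← integral_div]
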